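/- Suppose t_ε is a nonnegative random variable (the first ε-exit time of a sticky pair) with P(t_ε > εt) = E(exp(-√2·τ·l_ε(εt))), where l_ε(εt) → t/2 in probability as ε ↓ 0 with the exponential concentration bound P(|l_ε(εt) - t/2| > γt) ≤ C e^{-ctγ/ε}. Then the family {P(t_ε ≥ ε·)}_{ε≤1} is uniformly integrable and lim_{ε↓0} E(t_ε)/ε = ∫₀^∞ e^{-√2 τ u/2} du = √2/τ. -/

import Mathlib

open MeasureTheory ProbabilityTheory Filter Set

noncomputable section

private lemma exp_neg_lip_aux {x y : ℝ} (hx : 0 ≤ x) (hy : 0 ≤ y) :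
    |Real.exp (-x) - Real.exp (-y)| ≤ |x - y| := by
  wlog h : y ≤ x generalizing x y
  · rw [abs_sub_comm, abs_sub_comm x y]
    exact this hy hx (le_of_not_ge h)
  have h1 : Real.exp (-x) ≤ Real.exp (-y) := Real.exp_le_exp.2 (by linarith)
  have h2 : Real.exp (-y) ≤ 1 := Real.exp_le_one_iff.2 (by linarith)
  have h3 : Real.exp (-x) = Real.exp (-y) * Real.exp (-(x - y)) := by
    rw [← Real.exp_add]; ring_nf
  have h4 : 1 - (x - y) ≤ Real.exp (-(x - y)) := by
    have := Real.add_one_le_exp (-(x - y)); linarith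
  have h5 : 0 < Real.exp (-y) := Real.exp_pos _
  rw [abs_of_nonpos (by linarith), abs_of_nonneg (by linarith)]
  nlinarith

private lemma abs_integral_le_of_indicator_bound {Ω : Type*} [MeasurableSpace Ω]
    (P : Measure Ω) [IsProbabilityMeasure P]
    {h : Ω → ℝ} (hmeas : AEStronglyMeasurable h P) {S : Set Ω} (hS : MeasurableSet S)
    {b1 b2 : ℝ} (hb2 : 0 ≤ b2)
    (hbound : ∀ ω, |h ω| ≤ b1 + b2 * S.indicator (fun _ => (1 : ℝ)) ω) :
    |∫ ω, h ω ∂P| ≤ b1 + b2 * (P S).toReal := by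
  have hind : Integrable (S.indicator (fun _ => (1 : ℝ))) P :=
    (integrable_const (1 : ℝ)).indicator hS
  have hgint : Integrable (fun ω => b1 + b2 * S.indicator (fun _ => (1 : ℝ)) ω) P :=
    (integrable_const b1).add (hind.const_mul b2)
  have hint : Integrable h P := by
    refine hgint.mono' hmeas (ae_of_all _ fun ω => ?_)
    simpa [Real.norm_eq_abs] using hbound ω
  calc |∫ ω, h ω ∂P| ≤ ∫ ω, |h ω| ∂P := by
        simpa [Real.norm_eq_abs] using norm_integral_le_integral_norm (μ := P) h
    _ ≤ ∫ ω, (b1 + b2 * S.indicator (fun _ => (1 : ℝ)) ω) ∂P :=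
        integral_mono hint.abs hgint hbound
    _ = b1 + b2 * (P S).toReal := by
        rw [integral_add (integrable_const b1) (hind.const_mul b2), integral_const,
          integral_const_mul, integral_indicator_const _ hS]
        simp [measureReal_def]

/-- If `t_ε ≥ 0` satisfies `P(t_ε > εt) = E(exp(-√2·τ·l_ε(εt)))`, where
`l_ε(εt) → t/2` in probability with the exponential concentration bound
`P(|l_ε(εt) - t/2| > γt) ≤ C e^{-ctγ/ε}`, then the family `{P(t_ε ≥ ε·)}_{ε ≤ 1}` is
uniformly integrable and `lim_{ε↓0} E(t_ε)/ε = ∫₀^∞ e^{-√2 τ u/2} du = √2/τ`. -/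
theorem stmt_17 {Ω : Type*} [MeasurableSpace Ω] (P : Measure Ω) [IsProbabilityMeasure P]
    (τ : ℝ) (hτ : 0 < τ)
    (tε : ℝ → Ω → ℝ) (htε_meas : ∀ ε, Measurable (tε ε))
    (htε_nonneg : ∀ ε ω, 0 ≤ tε ε ω)
    (l : ℝ → ℝ → Ω → ℝ) (hl_meas : ∀ ε s, Measurable (l ε s))
    (hl_nonneg : ∀ ε s ω, 0 ≤ l ε s ω)
    (hid : ∀ ε t : ℝ, 0 < ε → 0 ≤ t →
      (P {ω | ε * t < tε ε ω}).toReal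
        = ∫ ω, Real.exp (-(Real.sqrt 2 * τ * l ε (ε * t) ω)) ∂P)
    (hconc : ∃ c C : ℝ, 0 < c ∧ 0 < C ∧ ∀ ε t γ : ℝ, 0 < ε → 0 < t → 0 < γ →
      P {ω | γ * t < |l ε (ε * t) ω - t / 2|}
        ≤ ENNReal.ofReal (C * Real.exp (-(c * t * γ / ε)))) :
    UnifIntegrable
        (fun (e : {e : ℝ // 0 < e ∧ e ≤ 1}) (t : ℝ) =>
          (P {ω | e.1 * t ≤ tε e.1 ω}).toReal) 1 (volume.restrict (Set.Ioi 0)) ∧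
    (∫ u in Set.Ioi (0 : ℝ), Real.exp (-(Real.sqrt 2 * τ * u / 2))) = Real.sqrt 2 / τ ∧
    Tendsto (fun ε : ℝ => (∫ ω, tε ε ω ∂P) / ε)
      (nhdsWithin 0 (Set.Ioi 0)) (nhds (Real.sqrt 2 / τ)) := by
  obtain ⟨c, C, hc, hC, hconc⟩ := hconc
  have sqrt2_pos : (0 : ℝ) < Real.sqrt 2 := Real.sqrt_pos.2 (by norm_num)
  set a : ℝ := Real.sqrt 2 * τ with ha_def
  have ha : 0 < a := mul_pos sqrt2_pos hτ
  -- integrability of the exponential integrand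
  have hexp_meas : ∀ ε s, Measurable fun ω => Real.exp (-(a * l ε s ω)) :=
    fun ε s => (((hl_meas ε s).const_mul a).neg).exp
  have hexp_int : ∀ ε s, Integrable (fun ω => Real.exp (-(a * l ε s ω))) P := by
    intro ε s
    refine (integrable_const (1 : ℝ)).mono' (hexp_meas ε s).aestronglyMeasurable
      (ae_of_all _ fun ω => ?_)
    rw [Real.norm_eq_abs, abs_of_pos (Real.exp_pos _)]
    exact Real.exp_le_one_iff.2 (by nlinarith [hl_nonneg ε s ω])
  -- measurability of the concentration sets
  have hSmeas : ∀ ε s (r : ℝ), MeasurableSet {ω | r < |l ε s ω - s / 2|} :=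
    fun ε s r => measurableSet_lt measurable_const (((hl_meas ε s).sub measurable_const).abs)
  -- tail bound
  have tail : ∀ ε t : ℝ, 0 < ε → ε ≤ 1 → 0 < t →
      (P {ω | ε * t < tε ε ω}).toReal
        ≤ Real.exp (-(a * t / 4)) + C * Real.exp (-(c * t / 4)) := by
    intro ε t hε hε1 ht
    rw [hid ε t hε ht.le]
    set S := {ω | (1 / 4 : ℝ) * t < |l ε (ε * t) ω - t / 2|} with hS_def
    have hSm : MeasurableSet S :=
      measurableSet_lt measurable_const (((hl_meas ε (ε * t)).sub measurable_const).abs)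
    have hb : ∀ ω, |Real.exp (-(a * l ε (ε * t) ω))|
        ≤ Real.exp (-(a * t / 4)) + 1 * S.indicator (fun _ => (1 : ℝ)) ω := by
      intro ω
      rw [abs_of_pos (Real.exp_pos _), one_mul]
      by_cases hω : ω ∈ S
      · rw [Set.indicator_of_mem hω]
        have h1 : Real.exp (-(a * l ε (ε * t) ω)) ≤ 1 :=
          Real.exp_le_one_iff.2 (by nlinarith [hl_nonneg ε (ε * t) ω])
        have h2 := (Real.exp_pos (-(a * t / 4))).le
        linarith
      · rw [Set.indicator_of_notMem hω, add_zero]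
        have h1 : |l ε (ε * t) ω - t / 2| ≤ (1 / 4) * t := le_of_not_gt hω
        have h2 : t / 4 ≤ l ε (ε * t) ω := by
          have := (abs_le.1 h1).1; linarith
        exact Real.exp_le_exp.2 (by nlinarith)
    have key := abs_integral_le_of_indicator_bound P
      (hexp_meas ε (ε * t)).aestronglyMeasurable hSm (by norm_num) hb
    have hPS : (P S).toReal ≤ C * Real.exp (-(c * t / 4)) := by
      have h1 := hconc ε t (1 / 4) hε ht (by norm_num)
      have h2 : (P S).toReal ≤ C * Real.exp (-(c * t * (1 / 4) / ε)) :=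
        ENNReal.toReal_le_of_le_ofReal (by positivity) h1
      refine h2.trans ?_
      have h3 : c * t / 4 ≤ c * t * (1 / 4) / ε :=
        (le_div_iff₀ hε).2 (by nlinarith [mul_pos hc ht])
      have h4 := Real.exp_le_exp.2 (neg_le_neg h3)
      nlinarith
    calc ∫ ω, Real.exp (-(a * l ε (ε * t) ω)) ∂P
        ≤ |∫ ω, Real.exp (-(a * l ε (ε * t) ω)) ∂P| := le_abs_self _
      _ ≤ Real.exp (-(a * t / 4)) + 1 * (P S).toReal := key
      _ ≤ Real.exp (-(a * t / 4)) + C * Real.exp (-(c * t / 4)) := by linarith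
  -- pointwise convergence of the exponential integrals
  have conv : ∀ t : ℝ, 0 < t →
      Tendsto (fun ε => ∫ ω, Real.exp (-(a * l ε (ε * t) ω)) ∂P) (nhdsWithin 0 (Set.Ioi 0))
        (nhds (Real.exp (-(a * t / 2)))) := by
    intro t ht
    rw [Metric.tendsto_nhds]
    intro η hη
    set γ : ℝ := η / (2 * (a * t + 1)) with hγ_def
    have hγ : 0 < γ := by positivity
    have hγt : a * (γ * t) < η / 2 := by
      have heq : a * (γ * t) = a * t * η / (2 * (a * t + 1)) := by rw [hγ_def]; ring
      rw [heq, div_lt_div_iff₀ (by positivity) (by norm_num : (0:ℝ) < 2)]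
      nlinarith [mul_pos ha ht]
    have htend : Tendsto (fun ε : ℝ => 2 * C * Real.exp (-(c * t * γ / ε)))
        (nhdsWithin 0 (Set.Ioi 0)) (nhds 0) := by
      have h1 : Tendsto (fun ε : ℝ => c * t * γ / ε) (nhdsWithin 0 (Set.Ioi 0)) atTop := by
        simpa [div_eq_mul_inv] using
          Tendsto.const_mul_atTop (by positivity : (0:ℝ) < c * t * γ) tendsto_inv_nhdsGT_zero
      have h2 := Real.tendsto_exp_atBot.comp (tendsto_neg_atTop_atBot.comp h1)
      have h3 := h2.const_mul (2 * C)
      simpa [Function.comp] using h3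
    have hev := htend.eventually_lt_const (by linarith : (0:ℝ) < η / 2)
    filter_upwards [hev, eventually_mem_nhdsWithin] with ε hε2 hεpos
    rw [Real.dist_eq]
    have hεpos' : 0 < ε := hεpos
    set S := {ω | γ * t < |l ε (ε * t) ω - t / 2|} with hS_def
    have hSm : MeasurableSet S :=
      measurableSet_lt measurable_const (((hl_meas ε (ε * t)).sub measurable_const).abs)
    have hdiff : |∫ ω, Real.exp (-(a * l ε (ε * t) ω)) ∂P - Real.exp (-(a * t / 2))|
        ≤ a * (γ * t) + 2 * (P S).toReal := by
      have heq : ∫ ω, (Real.exp (-(a * l ε (ε * t) ω)) - Real.exp (-(a * t / 2))) ∂P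
          = ∫ ω, Real.exp (-(a * l ε (ε * t) ω)) ∂P - Real.exp (-(a * t / 2)) := by
        rw [integral_sub (hexp_int ε (ε * t)) (integrable_const _), integral_const]
        simp
      rw [← heq]
      refine abs_integral_le_of_indicator_bound P
        ((hexp_meas ε (ε * t)).sub measurable_const).aestronglyMeasurable hSm
        (by norm_num) (fun ω => ?_)
      by_cases hω : ω ∈ S
      · rw [Set.indicator_of_mem hω, mul_one]
        have e1 : Real.exp (-(a * l ε (ε * t) ω)) ≤ 1 :=
          Real.exp_le_one_iff.2 (by nlinarith [hl_nonneg ε (ε * t) ω])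
        have e2 : Real.exp (-(a * t / 2)) ≤ 1 := Real.exp_le_one_iff.2 (by nlinarith)
        have e3 := (Real.exp_pos (-(a * l ε (ε * t) ω))).le
        have e4 := (Real.exp_pos (-(a * t / 2))).le
        have e5 : 0 ≤ a * (γ * t) := mul_nonneg ha.le (mul_nonneg hγ.le ht.le)
        simp only [Pi.sub_apply]
        rw [abs_le]
        constructor <;> linarith
      · rw [Set.indicator_of_notMem hω, mul_zero, add_zero]
        have h1 : |l ε (ε * t) ω - t / 2| ≤ γ * t := le_of_not_gt hω
        have h2 := exp_neg_lip_aux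
          (mul_nonneg ha.le (hl_nonneg ε (ε * t) ω))
          (mul_nonneg ha.le (by linarith : (0:ℝ) ≤ t / 2))
        rw [show -(a * t / 2) = -(a * (t / 2)) by ring]
        refine h2.trans ?_
        rw [← mul_sub, abs_mul, abs_of_pos ha]
        exact mul_le_mul_of_nonneg_left h1 ha.le
    have hPS : (P S).toReal ≤ C * Real.exp (-(c * t * γ / ε)) :=
      ENNReal.toReal_le_of_le_ofReal (by positivity) (hconc ε t γ hεpos' ht hγ)
    calc |∫ ω, Real.exp (-(a * l ε (ε * t) ω)) ∂P - Real.exp (-(a * t / 2))|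
        ≤ a * (γ * t) + 2 * (P S).toReal := hdiff
      _ ≤ a * (γ * t) + 2 * (C * Real.exp (-(c * t * γ / ε))) := by linarith
      _ = a * (γ * t) + 2 * C * Real.exp (-(c * t * γ / ε)) := by ring
      _ < η := by linarith
  -- integrable bound functions on (0, ∞)
  have hbd_int : ∀ b1 b2 : ℝ, 0 < b1 → 0 < b2 →
      IntegrableOn (fun x : ℝ => Real.exp (-(b1 * x)) + C * Real.exp (-(b2 * x))) (Ioi 0) := by
    intro b1 b2 h1 h2
    have e1 := exp_neg_integrableOn_Ioi 0 h1
    have e2 := (exp_neg_integrableOn_Ioi 0 h2).const_mul C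
    have e3 := e1.add e2
    simpa [neg_mul, Pi.add_def] using e3
  -- antitonicity of the tail functions
  have hF_anti : ∀ ε : ℝ, 0 < ε → Antitone (fun t : ℝ => (P {ω | ε * t < tε ε ω}).toReal) := by
    intro ε hε t1 t2 h12
    refine ENNReal.toReal_mono (measure_ne_top P _) (measure_mono fun ω hω => ?_)
    exact lt_of_le_of_lt (mul_le_mul_of_nonneg_left h12 hε.le) hω
  -- integrability of tε ε
  have htε_int : ∀ ε : ℝ, 0 < ε → ε ≤ 1 → Integrable (tε ε) P := by
    intro ε hε hε1
    refine ⟨(htε_meas ε).aestronglyMeasurable, ?_⟩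
    rw [hasFiniteIntegral_iff_ofReal (ae_of_all _ (htε_nonneg ε)),
      lintegral_eq_lintegral_meas_lt P (ae_of_all _ (htε_nonneg ε)) (htε_meas ε).aemeasurable]
    have hcont : Continuous fun x : ℝ =>
        Real.exp (-(a / (4 * ε) * x)) + C * Real.exp (-(c / (4 * ε) * x)) :=
      (Real.continuous_exp.comp ((continuous_const.mul continuous_id).neg)).add
        (continuous_const.mul
          (Real.continuous_exp.comp ((continuous_const.mul continuous_id).neg)))
    have hle : ∫⁻ t in Ioi (0:ℝ), P {x | t < tε ε x}
        ≤ ∫⁻ t in Ioi (0:ℝ), ENNReal.ofReal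
          (Real.exp (-(a / (4 * ε) * t)) + C * Real.exp (-(c / (4 * ε) * t))) := by
      refine setLIntegral_mono hcont.measurable.ennreal_ofReal fun t ht => ?_
      have ht' : (0:ℝ) < t := ht
      have htdiv : 0 < t / ε := by positivity
      have hset : {x | t < tε ε x} = {x | ε * (t / ε) < tε ε x} := by
        rw [mul_div_cancel₀ _ hε.ne']
      rw [hset, ENNReal.le_ofReal_iff_toReal_le (measure_ne_top P _) (by positivity)]
      have := tail ε (t / ε) hε hε1 htdiv
      rw [show -(a * (t / ε) / 4) = -(a / (4 * ε) * t) by field_simp,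
        show -(c * (t / ε) / 4) = -(c / (4 * ε) * t) by field_simp] at this
      exact this
    exact lt_of_le_of_lt hle (hbd_int (a / (4 * ε)) (c / (4 * ε))
      (by positivity) (by positivity)).lintegral_lt_top
  -- layer-cake + scaling identity
  have key : ∀ ε : ℝ, 0 < ε → ε ≤ 1 →
      (∫ ω, tε ε ω ∂P) / ε = ∫ t in Ioi (0:ℝ), (P {ω | ε * t < tε ε ω}).toReal := by
    intro ε hε hε1
    have h1 := (htε_int ε hε hε1).integral_eq_integral_meas_lt (ae_of_all _ (htε_nonneg ε))
    have h2 := integral_comp_mul_left_Ioi (fun s => (P {ω | s < tε ε ω}).toReal) 0 hε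
    beta_reduce at h2
    rw [mul_zero] at h2
    rw [h1, h2, smul_eq_mul, div_eq_inv_mul]
    rfl
  -- the value of the limiting integral
  have hval : (∫ u in Ioi (0:ℝ), Real.exp (-(a * u / 2))) = Real.sqrt 2 / τ := by
    have h2 : (0:ℝ) < a / 2 := by positivity
    have h3 := integral_comp_mul_left_Ioi (fun x => Real.exp (-x)) 0 h2
    beta_reduce at h3
    rw [mul_zero, integral_exp_neg_Ioi_zero, smul_eq_mul, mul_one] at h3
    have h4 : ∀ u : ℝ, -(a * u / 2) = -(a / 2 * u) := fun u => by ring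
    simp_rw [h4, h3, ha_def]
    have hsq := Real.mul_self_sqrt (by norm_num : (0:ℝ) ≤ 2)
    rw [inv_eq_one_div, div_eq_div_iff (by positivity) hτ.ne']
    nlinarith
  -- dominated convergence
  have hmain : Tendsto (fun ε : ℝ => ∫ t in Ioi (0:ℝ), (P {ω | ε * t < tε ε ω}).toReal)
      (nhdsWithin 0 (Set.Ioi 0)) (nhds (∫ t in Ioi (0:ℝ), Real.exp (-(a * t / 2)))) := by
    refine tendsto_integral_filter_of_dominated_convergence
      (fun t => Real.exp (-(a * t / 4)) + C * Real.exp (-(c * t / 4))) ?_ ?_ ?_ ?_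
    · filter_upwards [eventually_mem_nhdsWithin] with ε hε
      exact ((hF_anti ε hε).measurable).aestronglyMeasurable
    · filter_upwards [Ioc_mem_nhdsGT_of_mem (by constructor <;> norm_num : (0:ℝ) ∈ Ico 0 1)]
        with ε hε
      rw [ae_restrict_iff' measurableSet_Ioi]
      refine ae_of_all _ fun t ht => ?_
      rw [Real.norm_eq_abs, abs_of_nonneg ENNReal.toReal_nonneg]
      exact tail ε t hε.1 hε.2 ht
    · have := hbd_int (a / 4) (c / 4) (by positivity) (by positivity)
      refine this.congr (ae_of_all _ fun x => ?_)
      beta_reduce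
      rw [show -(a / 4 * x) = -(a * x / 4) by ring, show -(c / 4 * x) = -(c * x / 4) by ring]
    · rw [ae_restrict_iff' measurableSet_Ioi]
      refine ae_of_all _ fun t ht => ?_
      refine (conv t ht).congr' ?_
      filter_upwards [eventually_mem_nhdsWithin] with ε hε
      exact (hid ε t hε ht.le).symm
  refine ⟨?_, hval, ?_⟩
  · -- uniform integrability
    intro η hη
    have hg2 : Integrable (fun t : ℝ => Real.exp (-(a * t / 8)) + C * Real.exp (-(c * t / 8)))
        (volume.restrict (Ioi 0)) := by
      have := hbd_int (a / 8) (c / 8) (by positivity) (by positivity)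
      refine this.congr (ae_of_all _ fun x => ?_)
      beta_reduce
      rw [show -(a / 8 * x) = -(a * x / 8) by ring, show -(c / 8 * x) = -(c * x / 8) by ring]
    have hmem : MemLp (fun t : ℝ => Real.exp (-(a * t / 8)) + C * Real.exp (-(c * t / 8))) 1
        (volume.restrict (Ioi 0)) := memLp_one_iff_integrable.2 hg2
    obtain ⟨δ, hδ, hδ2⟩ := hmem.eLpNorm_indicator_le le_rfl ENNReal.one_ne_top hη
    refine ⟨δ, hδ, fun e s hs hμs => ?_⟩
    refine le_trans (eLpNorm_mono_ae ?_) (hδ2 s hs hμs)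
    rw [ae_restrict_iff' measurableSet_Ioi]
    refine ae_of_all _ fun t ht => ?_
    by_cases hts : t ∈ s
    · rw [Set.indicator_of_mem hts, Set.indicator_of_mem hts, Real.norm_eq_abs,
        Real.norm_eq_abs, abs_of_nonneg ENNReal.toReal_nonneg, abs_of_nonneg (by positivity)]
      have ht' : (0:ℝ) < t := ht
      have h1 : (P {ω | e.1 * t ≤ tε e.1 ω}).toReal
          ≤ (P {ω | e.1 * (t / 2) < tε e.1 ω}).toReal := by
        refine ENNReal.toReal_mono (measure_ne_top P _) (measure_mono fun ω hω => ?_)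
        have : e.1 * (t / 2) < e.1 * t := by nlinarith [e.2.1]
        exact lt_of_lt_of_le this hω
      refine h1.trans ?_
      have h2 := tail e.1 (t / 2) e.2.1 e.2.2 (by linarith)
      rw [show -(a * (t / 2) / 4) = -(a * t / 8) by ring,
        show -(c * (t / 2) / 4) = -(c * t / 8) by ring] at h2
      exact h2
    · rw [Set.indicator_of_notMem hts, Set.indicator_of_notMem hts]
  · -- the limit
    rw [← hval]
    refine hmain.congr' ?_
    filter_upwards [Ioc_mem_nhdsGT_of_mem (by constructor <;> norm_num : (0:ℝ) ∈ Ico 0 1)]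
      with ε hε
    exact (key ε hε.1 hε.2).symm

end
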